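/- Consider a linear cascade of N single-pole stages: let d : Fin N → ℝ with the d_i positive and pairwise distinct, and gains f : Fin (N-1) → ℝ. Let A be the N×N real matrix with diagonal entries −d_i, subdiagonal entries f_i, zeros elsewhere; B = e₁, C = e_Nᵀ. Then the steady-state output variance equals the closed form ∫₀^∞ (C e^{As} B)² ds = (∏_{u} f_u)² · Σ_{k=1}^{N} Σ_{m=1}^{N} 1 / ( (d_k + d_m) · ∏_{a ≠ k} (d_k − d_a) · ∏_{b ≠ m} (d_m − d_b) ). -/

import Mathlib

open MeasureTheory Matrix Finset

/-- The `N × N` dynamics matrix of a linear cascade: diagonal entries `-d i`,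
subdiagonal entries `A (i+1) i = f i`, zeros elsewhere. -/
noncomputable def cascadeMatrix (N : ℕ) (d : Fin N → ℝ) (f : Fin (N - 1) → ℝ) :
    Matrix (Fin N) (Fin N) ℝ := fun i j =>
  if i = j then -d i
  else if h : (i : ℕ) = (j : ℕ) + 1 then
    f ⟨j, by have hi := i.isLt; have hj := j.isLt; omega⟩
  else 0

lemma aux_integral_exp (b : ℝ) (hb : 0 < b) :
    ∫ x in Set.Ioi (0:ℝ), Real.exp (-b*x) = 1/b := by
  have hderiv : ∀ x ∈ Set.Ici (0:ℝ),
      HasDerivAt (fun x => -Real.exp (-b*x)/b) (Real.exp (-b*x)) x := by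
    intro x _
    have h1 : HasDerivAt (fun x : ℝ => -b*x) (-b) x := by
      simpa using (hasDerivAt_id x).const_mul (-b)
    have h2 := (h1.exp.neg.div_const b)
    refine h2.congr_deriv ?_
    rw [div_eq_iff hb.ne']; ring
  have htend : Filter.Tendsto (fun x => -Real.exp (-b*x)/b) Filter.atTop (nhds 0) := by
    have : Filter.Tendsto (fun x : ℝ => -b*x) Filter.atTop Filter.atBot :=
      Filter.tendsto_id.const_mul_atTop_of_neg (by linarith)
    have := (Real.tendsto_exp_atBot.comp this).neg.div_const b
    simpa using this
  have := integral_Ioi_of_hasDerivAt_of_tendsto' hderiv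
    (exp_neg_integrableOn_Ioi 0 hb) htend
  rw [this]; simp [div_eq_mul_inv]


section Cascade

variable {N : ℕ} (d : Fin N → ℝ) (f : Fin (N - 1) → ℝ)

/-- accumulated gain up to stage `i` -/
noncomputable def casC (i : Fin N) : ℝ :=
  ∏ u ∈ Finset.univ.filter (fun u : Fin (N - 1) => (u : ℕ) < (i : ℕ)), f u

/-- partial fraction weights -/
noncomputable def casW (i k : Fin N) : ℝ :=
  ∏ a ∈ (Finset.Iic i).erase k, (d a - d k)⁻¹

/-- explicit solution of the cascade ODE with x(0) = e₁ -/
noncomputable def casX (s : ℝ) (i : Fin N) : ℝ :=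
  casC f i * ∑ k ∈ Finset.Iic i, Real.exp (-d k * s) * casW d i k

lemma casX_deriv (hdist : Function.Injective d) (s : ℝ) (i : Fin N) :
    HasDerivAt (fun t => casX d f t i)
      (∑ j, cascadeMatrix N d f i j * casX d f s j) s := by
  have hbase : HasDerivAt (fun t => casX d f t i)
      (casC f i * ∑ k ∈ Finset.Iic i, (-d k) * (Real.exp (-d k * s) * casW d i k)) s := by
    unfold casX
    refine HasDerivAt.const_mul _ (HasDerivAt.fun_sum fun k _ => ?_)
    have h1 : HasDerivAt (fun t : ℝ => -d k * t) (-d k) s := by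
      simpa using (hasDerivAt_id s).const_mul (-d k)
    simpa [mul_comm, mul_assoc, mul_left_comm] using h1.exp.mul_const (casW d i k)
  convert hbase using 1
  -- now the algebraic identity
  rcases Nat.eq_zero_or_eq_succ_pred (i : ℕ) with h0 | hsucc
  · -- i = 0 case
    have hIic : Finset.Iic i = {i} := by
      ext a; simp only [Finset.mem_Iic, Finset.mem_singleton, Fin.le_def, Fin.ext_iff]
      omega
    have hrow : ∀ j, cascadeMatrix N d f i j * casX d f s j
        = if j = i then -d i * casX d f s i else 0 := by
      intro j
      unfold cascadeMatrix
      rcases eq_or_ne i j with rfl | hij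
      · simp
      · rw [if_neg hij, if_neg (Ne.symm hij)]
        have : ¬ ((i : ℕ) = (j : ℕ) + 1) := by omega
        rw [dif_neg this, zero_mul]
    rw [Finset.sum_congr rfl (fun j _ => hrow j), Finset.sum_ite_eq' Finset.univ i
      (fun _ => -d i * casX d f s i), if_pos (Finset.mem_univ i)]
    unfold casX
    rw [hIic]
    simp [mul_comm, mul_assoc, mul_left_comm]
  · -- i = p+1 case
    set p := (i : ℕ) - 1 with hp
    have hiv : (i : ℕ) = p + 1 := hsucc
    have hpN : p + 1 < N := hiv ▸ i.isLt
    set ip : Fin N := ⟨p, by omega⟩ with hip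
    set fp : Fin (N - 1) := ⟨p, by omega⟩ with hfp
    have hip_ne : ip ≠ i := by simp [Fin.ext_iff, hip]; omega
    -- row of the matrix
    have hrow : ∀ j, cascadeMatrix N d f i j * casX d f s j
        = (if j = i then -d i * casX d f s i else 0)
          + (if j = ip then f fp * casX d f s ip else 0) := by
      intro j
      unfold cascadeMatrix
      rcases eq_or_ne j i with rfl | hij
      · rw [if_pos rfl, if_pos rfl, if_neg hip_ne.symm, add_zero]
      · rw [if_neg (Ne.symm hij), if_neg hij, zero_add]
        rcases eq_or_ne j ip with hjp | hjp
        · have hj1 : (i : ℕ) = (j : ℕ) + 1 := by rw [hjp]; exact hiv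
          rw [dif_pos hj1, if_pos hjp]
          have hjv : (j : ℕ) = p := by rw [hjp]
          congr 1
          · congr 1
            exact Fin.ext hjv
          · rw [hjp]
        · have hj1 : ¬ ((i : ℕ) = (j : ℕ) + 1) := by
            intro hc
            apply hjp
            simp only [Fin.ext_iff, hip]
            omega
          rw [dif_neg hj1, if_neg hjp, zero_mul]
    rw [Finset.sum_congr rfl (fun j _ => hrow j), Finset.sum_add_distrib,
      Finset.sum_ite_eq' Finset.univ i, Finset.sum_ite_eq' Finset.univ ip,
      if_pos (Finset.mem_univ i), if_pos (Finset.mem_univ ip)]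
    -- structure of Iic i
    have hIic : Finset.Iic i = insert i (Finset.Iic ip) := by
      ext a; simp only [Finset.mem_Iic, Finset.mem_insert, Fin.le_def, Fin.ext_iff, hip]
      omega
    have hnotmem : i ∉ Finset.Iic ip := by
      simp only [Finset.mem_Iic, Fin.le_def, hip]; omega
    -- casC recurrence
    have hC : casC f i = f fp * casC f ip := by
      unfold casC
      have hfilt : Finset.univ.filter (fun u : Fin (N - 1) => (u : ℕ) < (i : ℕ))
          = insert fp (Finset.univ.filter (fun u : Fin (N - 1) => (u : ℕ) < (ip : ℕ))) := by
        ext u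
        simp only [Finset.mem_filter, Finset.mem_univ, true_and, Finset.mem_insert,
          Fin.ext_iff, hfp, hip]
        omega
      have hfpnot : fp ∉ Finset.univ.filter (fun u : Fin (N - 1) => (u : ℕ) < (ip : ℕ)) := by
        simp [hfp, hip]
      rw [hfilt, Finset.prod_insert hfpnot]
    -- casW recurrence
    have hW : ∀ k ∈ Finset.Iic ip, casW d ip k = (d i - d k) * casW d i k := by
      intro k hk
      have hkne : k ≠ i := fun hc => hnotmem (hc ▸ hk)
      have hdne : d i - d k ≠ 0 := sub_ne_zero.mpr fun hc => hkne (hdist hc).symm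
      unfold casW
      rw [hIic, Finset.erase_insert_of_ne hkne.symm, Finset.prod_insert
        (fun hc => hnotmem (Finset.mem_of_mem_erase hc)), ← mul_assoc,
        mul_inv_cancel₀ hdne, one_mul]
    -- the i-term weights
    have hWi : casW d i i = ∏ a ∈ Finset.Iic ip, (d a - d i)⁻¹ := by
      unfold casW
      rw [hIic, Finset.erase_insert hnotmem]
    -- expand everything
    have hterm : ∀ k ∈ Finset.Iic ip,
        casC f i * (-d k * (Real.exp (-d k * s) * casW d i k))
          = -d i * (casC f i * (Real.exp (-d k * s) * casW d i k))
            + f fp * (casC f ip * (Real.exp (-d k * s) * casW d ip k)) := by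
      intro k hk
      rw [hW k hk, hC]; ring
    have key : ∑ k ∈ Finset.Iic ip, casC f i * (-d k * (Real.exp (-d k * s) * casW d i k))
        = (∑ k ∈ Finset.Iic ip, -d i * (casC f i * (Real.exp (-d k * s) * casW d i k)))
          + ∑ k ∈ Finset.Iic ip, f fp * (casC f ip * (Real.exp (-d k * s) * casW d ip k)) := by
      rw [← Finset.sum_add_distrib]
      exact Finset.sum_congr rfl hterm
    unfold casX
    rw [hIic, Finset.sum_insert hnotmem, Finset.sum_insert hnotmem]
    simp only [mul_add, Finset.mul_sum]
    rw [key]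
    ring

end Cascade

section Cascade2

variable {N : ℕ} (d : Fin N → ℝ) (f : Fin (N - 1) → ℝ)

lemma aux_sum_inv_prod' {ι : Type*} [DecidableEq ι] (s : Finset ι) (v : ι → ℝ)
    (hvs : Set.InjOn v s) (h2 : 2 ≤ s.card) :
    ∑ k ∈ s, ∏ a ∈ s.erase k, (v k - v a)⁻¹ = 0 := by
  have hne : s.Nonempty := Finset.card_pos.mp (by omega)
  have hb := Lagrange.sum_basis hvs hne
  have hcoeff := congrArg (fun p => Polynomial.coeff p (s.card - 1)) hb
  simp only [Polynomial.finset_sum_coeff] at hcoeff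
  have hbasis : ∀ k ∈ s, (Lagrange.basis s v k).coeff (s.card - 1)
      = ∏ a ∈ s.erase k, (v k - v a)⁻¹ := by
    intro k hk
    have he : Lagrange.basis s v k
        = Polynomial.C (∏ a ∈ s.erase k, (v k - v a)⁻¹) * Lagrange.nodal (s.erase k) v := by
      unfold Lagrange.basis Lagrange.basisDivisor
      rw [Lagrange.nodal, Finset.prod_mul_distrib, map_prod]
    rw [he, Polynomial.coeff_C_mul]
    have hmon : (Lagrange.nodal (s.erase k) v).Monic := Lagrange.nodal_monic
    have hdeg : (Lagrange.nodal (s.erase k) v).natDegree = s.card - 1 := by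
      rw [Lagrange.natDegree_nodal, Finset.card_erase_of_mem hk]
    rw [← hdeg, hmon.coeff_natDegree, mul_one]
  rw [Finset.sum_congr rfl hbasis, Polynomial.coeff_one, if_neg (by omega)] at hcoeff
  exact hcoeff

lemma casX_zero (hdist : Function.Injective d) (i : Fin N) :
    casX d f 0 i = if (i : ℕ) = 0 then 1 else 0 := by
  rcases Nat.eq_zero_or_pos (i : ℕ) with h0 | hpos
  · have hIic : Finset.Iic i = {i} := by
      ext a
      simp only [Finset.mem_Iic, Finset.mem_singleton, Fin.le_def, Fin.ext_iff]
      omega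
    rw [if_pos h0]
    unfold casX casC casW
    rw [hIic]
    have hfe : Finset.univ.filter (fun u : Fin (N - 1) => (u : ℕ) < (i : ℕ)) = ∅ := by
      ext u; simp; omega
    simp [hfe]
  · rw [if_neg (by omega)]
    unfold casX
    have hsum : ∑ k ∈ Finset.Iic i, Real.exp (-d k * 0) * casW d i k
        = ∑ k ∈ Finset.Iic i, ∏ a ∈ (Finset.Iic i).erase k, ((-d) k - (-d) a)⁻¹ := by
      refine Finset.sum_congr rfl fun k _ => ?_
      rw [mul_zero, Real.exp_zero, one_mul]
      unfold casW
      refine Finset.prod_congr rfl fun a _ => ?_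
      norm_num
      ring_nf
    have hinj : Set.InjOn (-d) (Finset.Iic i) := fun a _ b _ h => hdist (neg_injective h)
    have hcard : 2 ≤ (Finset.Iic i).card := by
      rw [Fin.card_Iic]; omega
    rw [hsum, aux_sum_inv_prod' _ _ hinj hcard, mul_zero]

open NormedSpace in
lemma casX_eq_exp (hdist : Function.Injective d) (s : ℝ) (i : Fin N) :
    casX d f s i = ∑ j, (exp (s • cascadeMatrix N d f)) i j * casX d f 0 j := by
  letI : SeminormedRing (Matrix (Fin N) (Fin N) ℝ) := Matrix.linftyOpSemiNormedRing
  letI : NormedRing (Matrix (Fin N) (Fin N) ℝ) := Matrix.linftyOpNormedRing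
  letI : NormedAlgebra ℝ (Matrix (Fin N) (Fin N) ℝ) := Matrix.linftyOpNormedAlgebra
  set A := cascadeMatrix N d f with hA
  set g : ℝ → Fin N → ℝ := fun t i => ∑ j, (exp (t • (-A))) i j * casX d f t j with hg
  -- each coordinate of g has derivative 0
  have hgd : ∀ (i : Fin N) (t : ℝ), HasDerivAt (fun u => g u i) 0 t := by
    intro i t
    have hE : HasDerivAt (fun u : ℝ => exp (u • (-A))) (exp (t • (-A)) * (-A)) t :=
      hasDerivAt_exp_smul_const (-A) t
    have hEij : ∀ j k, HasDerivAt (fun u : ℝ => (exp (u • (-A))) j k)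
        ((exp (t • (-A)) * (-A)) j k) t := by
      intro j k
      let L : Matrix (Fin N) (Fin N) ℝ →ₗ[ℝ] ℝ :=
        (LinearMap.proj k).comp (LinearMap.proj (R := ℝ)
          (φ := fun _ : Fin N => Fin N → ℝ) j)
      exact (LinearMap.toContinuousLinearMap L).hasFDerivAt.comp_hasDerivAt t hE
    have hsum : HasDerivAt (fun u => g u i)
        (∑ j, ((exp (t • (-A)) * (-A)) i j * casX d f t j
          + (exp (t • (-A))) i j * (∑ l, A j l * casX d f t l))) t :=
      HasDerivAt.fun_sum fun j _ => (hEij i j).mul (casX_deriv d f hdist t j)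
    convert hsum using 1
    rw [Finset.sum_add_distrib]
    have h2 : ∑ j, (exp (t • (-A))) i j * (∑ l, A j l * casX d f t l)
        = ∑ j, (exp (t • (-A)) * A) i j * casX d f t j := by
      simp_rw [Matrix.mul_apply, Finset.sum_mul, Finset.mul_sum]
      rw [Finset.sum_comm]
      exact Finset.sum_congr rfl fun j _ => Finset.sum_congr rfl fun l _ => by ring
    rw [h2, Matrix.mul_neg]
    simp only [Matrix.neg_apply, neg_mul]
    rw [Finset.sum_neg_distrib, neg_add_cancel]
  -- hence g is constant
  have hconst : ∀ (i : Fin N), g s i = g 0 i := fun i =>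
    is_const_of_deriv_eq_zero (fun t => (hgd i t).differentiableAt)
      (fun t => (hgd i t).deriv) s 0
  -- g 0 = casX 0
  have hg0 : ∀ i, g 0 i = casX d f 0 i := by
    intro i
    simp only [hg, zero_smul, exp_zero, Matrix.one_apply, ite_mul, one_mul, zero_mul]
    rw [Finset.sum_ite_eq Finset.univ i (fun j => casX d f 0 j), if_pos (Finset.mem_univ i)]
  -- exp (s•A) * exp (s•(-A)) = 1
  have hcomm : Commute (s • A) (s • (-A)) := by
    rw [smul_neg]; exact (Commute.refl (s • A)).neg_right
  have hmul : exp (s • A) * exp (s • (-A)) = 1 := by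
    rw [← Matrix.exp_add_of_commute _ _ hcomm, smul_neg, add_neg_cancel, exp_zero]
  -- conclude
  have hcol : ∀ j, casX d f 0 j = g s j := fun j => ((hconst j).trans (hg0 j)).symm
  calc casX d f s i
      = ∑ j, (1 : Matrix (Fin N) (Fin N) ℝ) i j * casX d f s j := by
        simp only [Matrix.one_apply, ite_mul, one_mul, zero_mul]
        rw [Finset.sum_ite_eq Finset.univ i (fun j => casX d f s j),
          if_pos (Finset.mem_univ i)]
    _ = ∑ j, (exp (s • A) * exp (s • (-A))) i j * casX d f s j := by rw [hmul]
    _ = ∑ j, (exp (s • A)) i j * (∑ l, (exp (s • (-A))) j l * casX d f s l) := by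
        simp_rw [Matrix.mul_apply, Finset.sum_mul, Finset.mul_sum]
        rw [Finset.sum_comm]
        exact Finset.sum_congr rfl fun j _ => Finset.sum_congr rfl fun l _ => by ring
    _ = ∑ j, (exp (s • A)) i j * casX d f 0 j := by
        refine Finset.sum_congr rfl fun j _ => ?_
        rw [hcol j]

end Cascade2


/-- Closed form for the steady-state output variance of a linear cascade with pairwise
distinct positive rates `d` and gains `f`:
`∫₀^∞ (C e^{As} B)² ds = (∏ f_u)² · Σ_k Σ_m 1/((d_k + d_m) ∏_{a≠k}(d_k − d_a) ∏_{b≠m}(d_m − d_b))`,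
where `B = e₁`, `C = e_Nᵀ`. -/
theorem cascade_variance_closed_form (N : ℕ) (hN : 0 < N) (d : Fin N → ℝ)
    (hd : ∀ i, 0 < d i) (hdist : Function.Injective d) (f : Fin (N - 1) → ℝ) :
    (∫ s in Set.Ioi (0 : ℝ),
        ((NormedSpace.exp (s • cascadeMatrix N d f)) ⟨N - 1, by omega⟩ ⟨0, hN⟩) ^ 2)
      = (∏ u, f u) ^ 2 *
        ∑ k, ∑ m, 1 / ((d k + d m) * (∏ a ∈ univ.erase k, (d k - d a)) *
          (∏ b ∈ univ.erase m, (d m - d b))) := by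
  have hNN : N - 1 < N := by omega
  set lastI : Fin N := ⟨N - 1, hNN⟩ with hlastI
  set zeroI : Fin N := ⟨0, hN⟩ with hzeroI
  set A := cascadeMatrix N d f with hA
  -- the exponential entry equals the explicit solution
  have hentry : ∀ s : ℝ, (NormedSpace.exp (s • A)) lastI zeroI = casX d f s lastI := by
    intro s
    rw [casX_eq_exp d f hdist s lastI]
    have hz : ∀ j : Fin N, casX d f 0 j = if j = zeroI then 1 else 0 := by
      intro j; rw [casX_zero d f hdist j]
      congr 1
      simp only [hzeroI, Fin.ext_iff, eq_iff_iff]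
    simp only [hz, mul_ite, mul_one, mul_zero]
    rw [Finset.sum_ite_eq' Finset.univ zeroI, if_pos (Finset.mem_univ zeroI)]
  have hIic : Finset.Iic lastI = Finset.univ := by
    ext u; simp only [Finset.mem_Iic, Finset.mem_univ, iff_true, Fin.le_def, hlastI]
    omega
  have hC : casC f lastI = ∏ u, f u := by
    unfold casC
    congr 1
    ext u
    simp only [Finset.mem_filter, Finset.mem_univ, true_and, hlastI, iff_true]
    omega
  set F : ℝ := ∏ u, f u with hF
  set a : Fin N → ℝ := fun k => F * casW d lastI k with ha
  have hxl : ∀ s : ℝ, casX d f s lastI = ∑ k, a k * Real.exp (-d k * s) := by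
    intro s
    unfold casX
    rw [hIic, hC, Finset.mul_sum]
    exact Finset.sum_congr rfl fun k _ => by simp only [ha]; ring
  have hpos : ∀ k m : Fin N, (0:ℝ) < d k + d m := fun k m => by
    have := hd k; have := hd m; linarith
  have hsq : ∀ s : ℝ, ((NormedSpace.exp (s • A)) lastI zeroI) ^ 2
      = ∑ k, ∑ m, (a k * a m) * Real.exp (-(d k + d m) * s) := by
    intro s
    rw [hentry s, hxl s, sq, Finset.sum_mul_sum]
    refine Finset.sum_congr rfl fun k _ => Finset.sum_congr rfl fun m _ => ?_
    rw [mul_mul_mul_comm, ← Real.exp_add]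
    congr 1
    ring
  have hint : ∀ k m : Fin N,
      IntegrableOn (fun s : ℝ => (a k * a m) * Real.exp (-(d k + d m) * s)) (Set.Ioi 0) :=
    fun k m => (exp_neg_integrableOn_Ioi 0 (hpos k m)).const_mul _
  calc (∫ s in Set.Ioi (0 : ℝ), ((NormedSpace.exp (s • A)) lastI zeroI) ^ 2)
      = ∫ s in Set.Ioi (0 : ℝ), ∑ k, ∑ m, (a k * a m) * Real.exp (-(d k + d m) * s) := by
        exact congrArg _ (funext fun s => hsq s)
    _ = ∑ k, ∑ m, ∫ s in Set.Ioi (0 : ℝ), (a k * a m) * Real.exp (-(d k + d m) * s) := by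
        rw [MeasureTheory.integral_finset_sum _
          (fun k _ => integrable_finset_sum _ (fun m _ => hint k m))]
        exact Finset.sum_congr rfl fun k _ =>
          MeasureTheory.integral_finset_sum _ fun m _ => hint k m
    _ = ∑ k, ∑ m, (a k * a m) * (1 / (d k + d m)) := by
        refine Finset.sum_congr rfl fun k _ => Finset.sum_congr rfl fun m _ => ?_
        rw [MeasureTheory.integral_const_mul, aux_integral_exp _ (hpos k m)]
    _ = F ^ 2 * ∑ k, ∑ m, 1 / ((d k + d m) * (∏ x ∈ Finset.univ.erase k, (d k - d x)) *
          (∏ x ∈ Finset.univ.erase m, (d m - d x))) := by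
        rw [Finset.mul_sum]
        refine Finset.sum_congr rfl fun k _ => ?_
        rw [Finset.mul_sum]
        refine Finset.sum_congr rfl fun m _ => ?_
        have hcard : ∀ j : Fin N, (Finset.univ.erase j).card = N - 1 := fun j => by
          rw [Finset.card_erase_of_mem (Finset.mem_univ j), Finset.card_univ, Fintype.card_fin]
        have hW : ∀ j : Fin N, casW d lastI j
            = ((-1:ℝ) ^ (N - 1) * ∏ x ∈ Finset.univ.erase j, (d j - d x))⁻¹ := by
          intro j
          unfold casW
          rw [hIic]
          calc ∏ x ∈ Finset.univ.erase j, (d x - d j)⁻¹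
              = (∏ x ∈ Finset.univ.erase j, (d x - d j))⁻¹ := Finset.prod_inv_distrib _
            _ = ((-1:ℝ) ^ (N - 1) * ∏ x ∈ Finset.univ.erase j, (d j - d x))⁻¹ := by
                congr 1
                calc ∏ x ∈ Finset.univ.erase j, (d x - d j)
                    = ∏ x ∈ Finset.univ.erase j, (-1:ℝ) * (d j - d x) :=
                      Finset.prod_congr rfl fun x _ => by ring
                  _ = (∏ _x ∈ Finset.univ.erase j, (-1:ℝ))
                        * ∏ x ∈ Finset.univ.erase j, (d j - d x) :=
                      Finset.prod_mul_distrib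
                  _ = _ := by rw [Finset.prod_const, hcard j]
        have hs' : (((-1:ℝ) ^ (N - 1))⁻¹ * ((-1:ℝ) ^ (N - 1))⁻¹) = 1 := by
          rw [← mul_inv, ← pow_add, Even.neg_one_pow ⟨N - 1, rfl⟩, inv_one]
        simp only [ha, hW k, hW m, mul_inv, one_div]
        linear_combination (F ^ 2 * (∏ x ∈ Finset.univ.erase k, (d k - d x))⁻¹
          * (∏ x ∈ Finset.univ.erase m, (d m - d x))⁻¹ * (d k + d m)⁻¹) * hs'
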